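/- Let a ≤ b ≤ c and let X : [a,b] → ℝ^d and Y : [b,c] → ℝ^d be continuous paths that are differentiable with continuous derivative except at finitely many points, with integrable derivatives X' and Y'. Define the concatenation X∗Y : [a,c] → ℝ^d by (X∗Y)(t) = X(t) for t ∈ [a,b] and (X∗Y)(t) = Y(t) − Y(b) + X(b) for t ∈ [b,c]; its almost-everywhere derivative is X' on (a,b) and Y' on (b,c). Then for every word (i₁,…,i_k) ∈ {1,…,d}^k, the signature coordinate of the concatenation satisfies Chen's identity: S^{i₁…i_k}_{[a,c]}(X∗Y) = Σ_{j=0}^{k} S^{i₁…i_j}_{[a,b]}(X) · S^{i_{j+1}…i_k}_{[b,c]}(Y), where the signature coordinate of the empty word equals 1. -/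

import Mathlib

open MeasureTheory

/-- Auxiliary nested iterated integral: the word is given with its *last* letter first
(i.e. reversed), so that `sigRev X a (i :: w) b = ∫_a^b (sigRev X a w t) · (X^i)'(t) dt`. -/
noncomputable def sigRev {d : ℕ} (X : ℝ → Fin d → ℝ) (a : ℝ) : List (Fin d) → ℝ → ℝ
  | [], _ => 1
  | i :: w, b => ∫ t in a..b, sigRev X a w t * deriv (fun s => X s i) t

/-- The signature coordinate `S^{i₁…i_k}_{[a,b]}(X)` for the word `w = [i₁, …, i_k]`,
the iterated integral over the ordered simplex; the empty word has coordinate `1`. -/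
noncomputable def sigCoord {d : ℕ} (X : ℝ → Fin d → ℝ) (a b : ℝ) (w : List (Fin d)) : ℝ :=
  sigRev X a w.reverse b

/-- Continuity and integrability of the iterated integrals. -/
lemma sigRev_key {d : ℕ} (P : ℝ → Fin d → ℝ) (a b : ℝ) (hab : a ≤ b)
    (hint : ∀ i, IntervalIntegrable (fun t => deriv (fun s => P s i) t) volume a b) :
    ∀ v : List (Fin d), ContinuousOn (sigRev P a v) (Set.Icc a b) ∧
      ∀ i, IntervalIntegrable
        (fun t => sigRev P a v t * deriv (fun s => P s i) t) volume a b := by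
  intro v
  induction v with
  | nil =>
    constructor
    · have : sigRev P a [] = fun _ => (1 : ℝ) := rfl
      rw [this]; exact continuousOn_const
    · intro i
      simpa only [sigRev, one_mul] using hint i
  | cons j v ih =>
    have hcont : ContinuousOn (sigRev P a (j :: v)) (Set.Icc a b) := by
      have he : sigRev P a (j :: v)
          = fun t => ∫ s in a..t, sigRev P a v s * deriv (fun u => P u j) s := rfl
      rw [he, ← Set.uIcc_of_le hab]
      exact intervalIntegral.continuousOn_primitive_interval' (ih.2 j) Set.left_mem_uIcc
    refine ⟨hcont, fun i => ?_⟩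
    refine (hint i).continuousOn_mul ?_
    rwa [Set.uIcc_of_le hab]

/-- `sigRev` only depends on the a.e. derivative of the path. -/
lemma sigRev_congr {d : ℕ} (P Q : ℝ → Fin d → ℝ) (a b : ℝ)
    (h : ∀ i, ∀ᵐ t ∂(volume.restrict (Set.Ioc a b)),
        deriv (fun s => P s i) t = deriv (fun s => Q s i) t) :
    ∀ v : List (Fin d), ∀ t ∈ Set.Icc a b, sigRev P a v t = sigRev Q a v t := by
  intro v
  induction v with
  | nil => intro t _; rfl
  | cons i v ih =>
    intro t ht
    show (∫ s in a..t, sigRev P a v s * deriv (fun u => P u i) s)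
      = ∫ s in a..t, sigRev Q a v s * deriv (fun u => Q u i) s
    apply intervalIntegral.integral_congr_ae
    have h' := (ae_restrict_iff' measurableSet_Ioc).mp (h i)
    filter_upwards [h'] with s hs hsmem
    have hst : s ∈ Set.Ioc a t := by rwa [Set.uIoc_of_le ht.1] at hsmem
    have hsab : s ∈ Set.Ioc a b := ⟨hst.1, hst.2.trans ht.2⟩
    rw [ih s ⟨hsab.1.le, hsab.2⟩, hs hsab]

set_option maxHeartbeats 1000000 in
theorem chen_identity_concat (d : ℕ) (a b c : ℝ) (hab : a ≤ b) (hbc : b ≤ c)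
    (X Y : ℝ → Fin d → ℝ)
    (sX sY : Set ℝ) (hsX : sX.Finite) (hsY : sY.Finite)
    (hXc : ContinuousOn X (Set.Icc a b))
    (hYc : ContinuousOn Y (Set.Icc b c))
    (hXd : ∀ t ∈ Set.Ioo a b \ sX, DifferentiableAt ℝ X t)
    (hYd : ∀ t ∈ Set.Ioo b c \ sY, DifferentiableAt ℝ Y t)
    (hXd' : ContinuousOn (deriv X) (Set.Ioo a b \ sX))
    (hYd' : ContinuousOn (deriv Y) (Set.Ioo b c \ sY))
    (hXi : IntervalIntegrable (deriv X) volume a b)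
    (hYi : IntervalIntegrable (deriv Y) volume b c)
    (Z : ℝ → Fin d → ℝ)
    (hZ : ∀ t, Z t = if t ≤ b then X t else Y t - Y b + X b)
    (w : List (Fin d)) :
    sigCoord Z a c w =
      ∑ j ∈ Finset.range (w.length + 1),
        sigCoord X a b (w.take j) * sigCoord Y b c (w.drop j) := by
  classical
  -- a.e. equality of component derivatives of Z with those of X on (a,b]
  have hZX : ∀ i, ∀ᵐ t ∂(volume.restrict (Set.Ioc a b)),
      deriv (fun s => Z s i) t = deriv (fun s => X s i) t := by
    intro i
    have hb : ∀ᵐ t : ℝ, t ≠ b := by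
      have hset : {t : ℝ | ¬ t ≠ b} = {b} := by ext t; simp
      rw [ae_iff, hset]; exact measure_singleton b
    filter_upwards [ae_restrict_mem measurableSet_Ioc, ae_restrict_of_ae hb] with t htm htb
    have htlt : t < b := lt_of_le_of_ne htm.2 htb
    have heq : (fun s => Z s i) =ᶠ[nhds t] fun s => X s i := by
      filter_upwards [Iio_mem_nhds htlt] with s hs
      rw [hZ s, if_pos (le_of_lt hs)]
    exact heq.deriv_eq
  -- a.e. equality of component derivatives of Z with those of Y on (b,c]
  have hZY : ∀ i, ∀ᵐ t ∂(volume.restrict (Set.Ioc b c)),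
      deriv (fun s => Z s i) t = deriv (fun s => Y s i) t := by
    intro i
    filter_upwards [ae_restrict_mem measurableSet_Ioc] with t htm
    have heq : (fun s => Z s i) =ᶠ[nhds t] fun s => Y s i + (X b i - Y b i) := by
      filter_upwards [Ioi_mem_nhds htm.1] with s hs
      rw [hZ s, if_neg (not_le.mpr hs)]
      simp only [Pi.add_apply, Pi.sub_apply]; ring
    rw [heq.deriv_eq, deriv_add_const]
  -- componentwise integrability of the derivatives
  have hXint : ∀ i, IntervalIntegrable (fun t => deriv (fun s => X s i) t) volume a b := by
    intro i
    have hcomp : IntervalIntegrable (fun t => deriv X t i) volume a b :=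
      ⟨(ContinuousLinearMap.proj (R := ℝ) (φ := fun _ : Fin d => ℝ) i).integrable_comp hXi.1,
        (ContinuousLinearMap.proj (R := ℝ) (φ := fun _ : Fin d => ℝ) i).integrable_comp hXi.2⟩
    refine hcomp.congr_ae ?_
    rw [Set.uIoc_of_le hab]
    have hE : ∀ᵐ t : ℝ, t ∉ sX ∪ {b} :=
      measure_eq_zero_iff_ae_notMem.mp ((hsX.union (Set.finite_singleton b)).measure_zero _)
    filter_upwards [ae_restrict_mem measurableSet_Ioc, ae_restrict_of_ae hE] with t htm htE
    have ht : t ∈ Set.Ioo a b \ sX :=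
      ⟨⟨htm.1, lt_of_le_of_ne htm.2 fun h => htE (Or.inr h)⟩, fun h => htE (Or.inl h)⟩
    exact ((hasDerivAt_pi.mp (hXd t ht).hasDerivAt i).deriv).symm
  have hYint : ∀ i, IntervalIntegrable (fun t => deriv (fun s => Y s i) t) volume b c := by
    intro i
    have hcomp : IntervalIntegrable (fun t => deriv Y t i) volume b c :=
      ⟨(ContinuousLinearMap.proj (R := ℝ) (φ := fun _ : Fin d => ℝ) i).integrable_comp hYi.1,
        (ContinuousLinearMap.proj (R := ℝ) (φ := fun _ : Fin d => ℝ) i).integrable_comp hYi.2⟩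
    refine hcomp.congr_ae ?_
    rw [Set.uIoc_of_le hbc]
    have hE : ∀ᵐ t : ℝ, t ∉ sY ∪ {c} :=
      measure_eq_zero_iff_ae_notMem.mp ((hsY.union (Set.finite_singleton c)).measure_zero _)
    filter_upwards [ae_restrict_mem measurableSet_Ioc, ae_restrict_of_ae hE] with t htm htE
    have ht : t ∈ Set.Ioo b c \ sY :=
      ⟨⟨htm.1, lt_of_le_of_ne htm.2 fun h => htE (Or.inr h)⟩, fun h => htE (Or.inl h)⟩
    exact ((hasDerivAt_pi.mp (hYd t ht).hasDerivAt i).deriv).symm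
  have keyX := sigRev_key X a b hab hXint
  have keyY := sigRev_key Y b c hbc hYint
  have hZXrev : ∀ v : List (Fin d), ∀ t ∈ Set.Icc a b, sigRev Z a v t = sigRev X a v t :=
    sigRev_congr Z X a b hZX
  -- the main induction
  have main : ∀ v : List (Fin d), ∀ t ∈ Set.Icc b c,
      sigRev Z a v t = ∑ m ∈ Finset.range (v.length + 1),
        sigRev X a (v.drop m) b * sigRev Y b (v.take m) t := by
    intro v
    induction v with
    | nil => intro t _; simp [sigRev]
    | cons i v ih =>
      intro t ht
      -- the integrand on [a,b] agrees a.e. with the X-integrand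
      have haeX : (fun s => sigRev X a v s * deriv (fun u => X u i) s)
          =ᵐ[volume.restrict (Set.Ioc a b)]
            (fun s => sigRev Z a v s * deriv (fun u => Z u i) s) := by
        filter_upwards [hZX i, ae_restrict_mem measurableSet_Ioc] with s hs hsm
        rw [hZXrev v s ⟨hsm.1.le, hsm.2⟩, hs]
      have hZab : IntervalIntegrable
          (fun s => sigRev Z a v s * deriv (fun u => Z u i) s) volume a b :=
        ((keyX v).2 i).congr_ae (by rw [Set.uIoc_of_le hab]; exact haeX)
      -- on [b,t] the integrand agrees a.e. with a finite sum of Y-integrands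
      have hFint : IntervalIntegrable (fun s => ∑ m ∈ Finset.range (v.length + 1),
          sigRev X a (v.drop m) b * (sigRev Y b (v.take m) s * deriv (fun u => Y u i) s))
          volume b c := by
        have h2 := IntervalIntegrable.sum (μ := volume) (a := b) (b := c)
          (f := fun m => fun s =>
            sigRev X a (v.drop m) b * (sigRev Y b (v.take m) s * deriv (fun u => Y u i) s))
          (Finset.range (v.length + 1))
          (fun m _ => ((keyY (v.take m)).2 i).const_mul _)
        have h3 : (∑ m ∈ Finset.range (v.length + 1), fun s =>
              sigRev X a (v.drop m) b * (sigRev Y b (v.take m) s * deriv (fun u => Y u i) s))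
            = fun s => ∑ m ∈ Finset.range (v.length + 1),
              sigRev X a (v.drop m) b * (sigRev Y b (v.take m) s * deriv (fun u => Y u i) s) := by
          funext s; simp [Finset.sum_apply]
        rwa [h3] at h2
      have haeY : (fun s => ∑ m ∈ Finset.range (v.length + 1),
            sigRev X a (v.drop m) b * (sigRev Y b (v.take m) s * deriv (fun u => Y u i) s))
          =ᵐ[volume.restrict (Set.Ioc b t)]
          (fun s => sigRev Z a v s * deriv (fun u => Z u i) s) := by
        have hsub : Set.Ioc b t ⊆ Set.Ioc b c := Set.Ioc_subset_Ioc_right ht.2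
        filter_upwards [ae_restrict_of_ae_restrict_of_subset hsub (hZY i),
          ae_restrict_mem measurableSet_Ioc] with s hs hsm
        have hsIcc : s ∈ Set.Icc b c := ⟨hsm.1.le, hsm.2.trans ht.2⟩
        rw [ih s hsIcc, hs, Finset.sum_mul]
        exact Finset.sum_congr rfl fun m _ => (mul_assoc _ _ _).symm
      have hsubI : Set.uIcc b t ⊆ Set.uIcc b c := by
        rw [Set.uIcc_of_le ht.1, Set.uIcc_of_le hbc]
        exact Set.Icc_subset_Icc_right ht.2
      have hZbt : IntervalIntegrable
          (fun s => sigRev Z a v s * deriv (fun u => Z u i) s) volume b t :=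
        (hFint.mono_set hsubI).congr_ae (by rw [Set.uIoc_of_le ht.1]; exact haeY)
      have hsplit : sigRev Z a (i :: v) t
          = (∫ s in a..b, sigRev Z a v s * deriv (fun u => Z u i) s)
            + ∫ s in b..t, sigRev Z a v s * deriv (fun u => Z u i) s :=
        (intervalIntegral.integral_add_adjacent_intervals hZab hZbt).symm
      have hI1 : (∫ s in a..b, sigRev Z a v s * deriv (fun u => Z u i) s)
          = sigRev X a (i :: v) b := by
        show _ = ∫ s in a..b, sigRev X a v s * deriv (fun u => X u i) s
        rw [intervalIntegral.integral_of_le hab, intervalIntegral.integral_of_le hab]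
        exact integral_congr_ae haeX.symm
      have hI2 : (∫ s in b..t, sigRev Z a v s * deriv (fun u => Z u i) s)
          = ∑ m ∈ Finset.range (v.length + 1),
              sigRev X a (v.drop m) b * sigRev Y b (i :: v.take m) t := by
        have h1 : (∫ s in b..t, sigRev Z a v s * deriv (fun u => Z u i) s)
            = ∫ s in b..t, ∑ m ∈ Finset.range (v.length + 1),
              sigRev X a (v.drop m) b * (sigRev Y b (v.take m) s * deriv (fun u => Y u i) s) := by
          rw [intervalIntegral.integral_of_le ht.1, intervalIntegral.integral_of_le ht.1]
          exact integral_congr_ae haeY.symm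
        rw [h1]
        rw [intervalIntegral.integral_finset_sum
          (fun m _ => (((keyY (v.take m)).2 i).const_mul _).mono_set hsubI)]
        refine Finset.sum_congr rfl fun m _ => ?_
        rw [intervalIntegral.integral_const_mul]
        rfl
      rw [hsplit, hI1, hI2, List.length_cons,
        Finset.sum_range_succ'
          (fun m => sigRev X a (List.drop m (i :: v)) b * sigRev Y b (List.take m (i :: v)) t)
          (v.length + 1)]
      simp only [List.take_succ_cons, List.drop_succ_cons, List.take_zero, List.drop_zero]
      have h0 : sigRev Y b ([] : List (Fin d)) t = 1 := rfl
      rw [h0, mul_one, add_comm]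
  have key := main w.reverse c ⟨hbc, le_refl c⟩
  rw [sigCoord, key, List.length_reverse,
    ← Finset.sum_range_reflect
      (fun m => sigRev X a (w.reverse.drop m) b * sigRev Y b (w.reverse.take m) c)
      (w.length + 1)]
  refine Finset.sum_congr rfl fun j hj => ?_
  have h1 : w.length + 1 - 1 - j = w.length - j := by omega
  rw [h1, sigCoord, sigCoord, List.reverse_take, List.reverse_drop]
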